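/- Let f : ℝ → ℂ, let a be a real number with a > 1, and let c be a real number with c > 0. Let F denote the Mellin transform of f, F(s) = ∫₀^∞ x^{s−1} f(x) dx. Assume that (i) the function t ↦ F(c + i t) is integrable on ℝ, and (ii) for every natural number n the Mellin inversion formula holds at aⁿ, i.e. f(aⁿ) = (1/(2π)) ∫_ℝ a^{−n(c+it)} F(c + i t) dt. Then the series ∑_{n=0}^∞ f(aⁿ) converges and ∑_{n=0}^∞ f(aⁿ) = (1/(2π)) ∫_ℝ F(c + i t)/(1 − a^{−(c+it)}) dt. -/

import Mathlib

open MeasureTheory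

theorem stmt0 (f : ℝ → ℂ) (a c : ℝ) (ha : 1 < a) (hc : 0 < c)
    (F : ℂ → ℂ)
    (hF : ∀ s : ℂ, F s = ∫ x in Set.Ioi (0 : ℝ), (x : ℂ) ^ (s - 1) * f x)
    (hInt : Integrable (fun t : ℝ => F (c + t * Complex.I)))
    (hInv : ∀ n : ℕ, f (a ^ n) =
      (1 / (2 * (Real.pi : ℂ))) *
        ∫ t : ℝ, (a : ℂ) ^ (-(n : ℂ) * (c + t * Complex.I)) * F (c + t * Complex.I)) :
    HasSum (fun n : ℕ => f (a ^ n))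
      ((1 / (2 * (Real.pi : ℂ))) *
        ∫ t : ℝ, F (c + t * Complex.I) / (1 - (a : ℂ) ^ (-(c + t * Complex.I)))) := by
  have ha0 : (0:ℝ) < a := lt_trans one_pos ha
  have haC : (a:ℂ) ≠ 0 := by exact_mod_cast ha0.ne'
  set g : ℕ → ℝ → ℂ := fun n t =>
    (a : ℂ) ^ (-(n : ℂ) * (c + t * Complex.I)) * F (c + t * Complex.I) with hg
  have hnorm : ∀ z : ℂ, ‖(a:ℂ) ^ z‖ = a ^ z.re := fun z => by
    rw [Complex.norm_cpow_eq_rpow_re_of_pos ha0]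
  have hnormg : ∀ n : ℕ, ∀ t : ℝ,
      ‖(a : ℂ) ^ (-(n : ℂ) * (c + t * Complex.I))‖ = a ^ (-(n:ℝ) * c) := by
    intro n t
    rw [hnorm]
    congr 1
    simp
  have hmeas : ∀ n : ℕ, Continuous fun t : ℝ =>
      (a : ℂ) ^ (-(n : ℂ) * (c + t * Complex.I)) := by
    intro n
    apply Continuous.const_cpow (by fun_prop) (Or.inl haC)
  have hint : ∀ n : ℕ, Integrable (g n) := by
    intro n
    exact hInt.bdd_mul (hmeas n).aestronglyMeasurable
      (c := a ^ (-(n:ℝ) * c)) (Filter.Eventually.of_forall fun t => le_of_eq (hnormg n t))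
  have hsum : Summable fun n : ℕ => ∫ t : ℝ, ‖g n t‖ := by
    have : (fun n : ℕ => ∫ t : ℝ, ‖g n t‖)
        = fun n : ℕ => (a ^ (-c)) ^ n * ∫ t : ℝ, ‖F (c + t * Complex.I)‖ := by
      funext n
      rw [← integral_const_mul]
      congr 1 with t
      rw [hg]
      simp only [norm_mul, hnormg n t]
      congr 1
      rw [← Real.rpow_natCast (a ^ (-c)) n, ← Real.rpow_mul ha0.le]
      ring_nf
    rw [this]
    exact (summable_geometric_of_lt_one (Real.rpow_nonneg ha0.le _)
      (Real.rpow_lt_one_of_one_lt_of_neg ha (neg_neg_iff_pos.mpr hc))).mul_right _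
  have key := hasSum_integral_of_summable_integral_norm hint hsum
  have hlt : ∀ t : ℝ, ‖(a : ℂ) ^ (-(c + t * Complex.I))‖ < 1 := by
    intro t
    rw [hnorm]
    have : (-(c + (t:ℂ) * Complex.I)).re = -c := by simp
    rw [this]
    exact Real.rpow_lt_one_of_one_lt_of_neg ha (neg_neg_iff_pos.mpr hc)
  have htsum : ∀ t : ℝ, (∑' n : ℕ, g n t)
      = F (c + t * Complex.I) / (1 - (a : ℂ) ^ (-(c + t * Complex.I))) := by
    intro t
    have h1 : ∀ n : ℕ, (a : ℂ) ^ (-(n : ℂ) * (c + t * Complex.I))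
        = ((a : ℂ) ^ (-(c + (t:ℂ) * Complex.I))) ^ n := by
      intro n
      rw [← Complex.cpow_nat_mul]
      ring_nf
    simp only [hg, h1]
    rw [tsum_mul_right, tsum_geometric_of_norm_lt_one (hlt t),
      div_eq_mul_inv, mul_comm]
  rw [MeasureTheory.integral_congr_ae (Filter.Eventually.of_forall htsum)] at key
  have := key.mul_left (1 / (2 * (Real.pi : ℂ)))
  convert this using 2 with n
  · rfl
  exact hInv n
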